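/- For c > 0 and x ≥ 0, the function 0F1(-;c;x) = ∑_{n≥0} x^n/((c)_n n!) satisfies the lower bound 0F1(-;c;x) ≥ e^{√(4x+c²) − c} · ((1/2) + (1/(2c))√(4x+c²))^{-c}. -/

import Mathlib

open Finset Real MeasureTheory

noncomputable def rise (a : ℝ) (n : ℕ) : ℝ := ∏ k ∈ Finset.range n, (a + k)

namespace Stmt9Aux

lemma rise_zero (a : ℝ) : rise a 0 = 1 := by simp [rise]

lemma rise_succ (a : ℝ) (n : ℕ) : rise a (n+1) = rise a n * (a + n) := by
  simp [rise, Finset.prod_range_succ]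

lemma rise_succ' (a : ℝ) (n : ℕ) : rise a (n+1) = a * rise (a+1) n := by
  rw [rise, Finset.prod_range_succ']
  have h : ∀ x : ℕ, a + ((x:ℝ) + 1) = (a + 1) + x := by intro x; ring
  push_cast
  simp only [h, add_zero]
  rw [mul_comm]
  rfl

lemma rise_pos {a : ℝ} (ha : 0 < a) (n : ℕ) : 0 < rise a n := by
  apply Finset.prod_pos
  intro k _
  positivity

lemma rise_nonneg {a : ℝ} (ha : 0 < a) (n : ℕ) : 0 ≤ rise a n := (rise_pos ha n).le

lemma rise_ne {a : ℝ} (ha : 0 < a) (n : ℕ) : rise a n ≠ 0 := (rise_pos ha n).ne'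

lemma rise_add (a : ℝ) (k m : ℕ) : rise a (k + m) = rise a k * rise (a + k) m := by
  rw [rise, Finset.prod_range_add]
  congr 1
  apply Finset.prod_congr rfl
  intro j _
  push_cast
  ring

lemma rise_reflect (a : ℝ) (m : ℕ) : rise a m = (-1)^m * rise (-a - m + 1) m := by
  rw [rise, rise, ← Finset.prod_range_reflect (fun k => a + k)]
  have h1 : ∀ j ∈ Finset.range m, a + ((m - 1 - j : ℕ) : ℝ)
      = (-1) * (-a - m + 1 + j) := by
    intro j hj
    have hj' : j < m := Finset.mem_range.mp hj
    rw [Nat.cast_sub (by omega), Nat.cast_sub (by omega)]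
    push_cast
    ring
  rw [Finset.prod_congr rfl h1, Finset.prod_mul_distrib, Finset.prod_const,
    Finset.card_range]

lemma vandermonde (x y : ℝ) (n : ℕ) :
    ∑ k ∈ Finset.range (n+1), (n.choose k : ℝ) * (rise x k * rise y (n-k))
      = rise (x+y) n := by
  induction n with
  | zero => simp [rise]
  | succ n ih =>
      have key : rise (x+y) (n+1)
          = (∑ k ∈ Finset.range (n+1), (n.choose k : ℝ) * (rise x (k+1) * rise y (n-k)))
            + ∑ k ∈ Finset.range (n+1), (n.choose k : ℝ) * (rise x k * rise y (n+1-k)) := by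
        rw [rise_succ, ← ih, Finset.sum_mul, ← Finset.sum_add_distrib]
        apply Finset.sum_congr rfl
        intro k hk
        have hk' : k ≤ n := Nat.lt_succ_iff.mp (Finset.mem_range.mp hk)
        have e1 : rise x (k+1) = rise x k * (x + k) := rise_succ x k
        have e2 : rise y (n+1-k) = rise y (n-k) * (y + (n-k : ℕ)) := by
          rw [show n+1-k = (n-k)+1 by omega]; exact rise_succ y (n-k)
        have e3 : ((n-k : ℕ) : ℝ) = (n : ℝ) - k := by
          rw [Nat.cast_sub hk']
        rw [e1, e2, e3]
        ring
      rw [key]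
      rw [Finset.sum_range_succ' (fun k => ((n+1).choose k : ℝ) * (rise x k * rise y (n+1-k)))]
      have split : ∀ k ∈ Finset.range (n+1),
          (((n+1).choose (k+1) : ℝ)) * (rise x (k+1) * rise y (n+1-(k+1)))
            = (n.choose k : ℝ) * (rise x (k+1) * rise y (n-k))
              + (n.choose (k+1) : ℝ) * (rise x (k+1) * rise y (n-k)) := by
        intro k hk
        have : (n+1).choose (k+1) = n.choose k + n.choose (k+1) := Nat.choose_succ_succ n k
        rw [Nat.succ_sub_succ n k, this]
        push_cast
        ring
      rw [Finset.sum_congr rfl split, Finset.sum_add_distrib]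
      have last : ∑ k ∈ Finset.range (n+1), (n.choose (k+1) : ℝ) * (rise x (k+1) * rise y (n-k))
            + ((n+1).choose 0 : ℝ) * (rise x 0 * rise y (n+1-0))
          = ∑ k ∈ Finset.range (n+1), (n.choose k : ℝ) * (rise x k * rise y (n+1-k)) := by
        rw [Finset.sum_range_succ' (fun k => (n.choose k : ℝ) * (rise x k * rise y (n+1-k)))]
        congr 1
        · rw [Finset.sum_range_succ]
          have hz : (n.choose (n+1) : ℝ) = 0 := by
            rw [Nat.choose_succ_self]; simp
          rw [hz, zero_mul, add_zero]
          apply Finset.sum_congr rfl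
          intro k hk
          rw [Nat.succ_sub_succ n k]
        · simp
      rw [add_assoc, last]

lemma keyT (b b' : ℝ) (n : ℕ) :
    ∑ k ∈ Finset.range (n+1),
        (n.choose k : ℝ) * (rise (b+k) (n-k) * rise (b'+(n-k : ℕ)) k)
      = rise (b+b'+n-1) n := by
  have refl1 : ∀ k ∈ Finset.range (n+1),
      (n.choose k : ℝ) * (rise (b+k) (n-k) * rise (b'+(n-k : ℕ)) k)
        = (-1)^n * ((n.choose k : ℝ) * (rise (1-b'-n) k * rise (1-b-n) (n-k))) := by
    intro k hk
    have hk' : k ≤ n := Nat.lt_succ_iff.mp (Finset.mem_range.mp hk)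
    have e3 : ((n-k : ℕ) : ℝ) = (n : ℝ) - k := Nat.cast_sub hk'
    have r1 : rise (b+k) (n-k) = (-1)^(n-k) * rise (1-b-n) (n-k) := by
      rw [rise_reflect (b+k) (n-k), e3]
      ring_nf
    have r2 : rise (b'+(n-k : ℕ)) k = (-1)^k * rise (1-b'-n) k := by
      rw [rise_reflect (b'+(n-k:ℕ)) k, e3]
      ring_nf
    rw [r1, r2]
    have h4 : (-1:ℝ)^(n-k) * (-1:ℝ)^k = (-1)^n := by
      rw [← pow_add, show n-k+k = n by omega]
    linear_combination ((n.choose k : ℝ) * rise (1-b-n) (n-k) * rise (1-b'-n) k) * h4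
  rw [Finset.sum_congr rfl refl1, ← Finset.mul_sum, vandermonde (1-b'-n) (1-b-n) n]
  rw [rise_reflect (b+b'+n-1) n]
  ring_nf

lemma cauchyCoeff (x : ℝ) {b b' : ℝ} (hb : 0 < b) (hb' : 0 < b') (n : ℕ) :
    ∑ k ∈ Finset.range (n+1),
        (x ^ k / (rise b k * (Nat.factorial k)) * (x ^ (n-k) / (rise b' (n-k) * (Nat.factorial (n-k)))))
      = x ^ n * (rise (b+b'+n-1) n / (rise b n * rise b' n * (Nat.factorial n))) := by
  have hterm : ∀ k ∈ Finset.range (n+1),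
      (x ^ k / (rise b k * (Nat.factorial k)) * (x ^ (n-k) / (rise b' (n-k) * (Nat.factorial (n-k)))))
        = x ^ n * (((n.choose k : ℝ) * (rise (b+k) (n-k) * rise (b'+(n-k : ℕ)) k))
            / (rise b n * rise b' n * (Nat.factorial n))) := by
    intro k hk
    have hk' : k ≤ n := Nat.lt_succ_iff.mp (Finset.mem_range.mp hk)
    have hn1 : rise b n = rise b k * rise (b+k) (n-k) := by
      have h := rise_add b k (n-k)
      rwa [show k+(n-k) = n by omega] at h
    have hn2 : rise b' n = rise b' (n-k) * rise (b'+(n-k:ℕ)) k := by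
      have h := rise_add b' (n-k) k
      rwa [show (n-k)+k = n by omega] at h
    have hfac : ((Nat.factorial n : ℝ)) = (n.choose k) * (Nat.factorial k) * (Nat.factorial (n-k)) := by
      exact_mod_cast congrArg (Nat.cast (R := ℝ)) (Nat.choose_mul_factorial_mul_factorial hk').symm
    have hx : x ^ k * x ^ (n-k) = x ^ n := by
      rw [← pow_add, show k+(n-k) = n by omega]
    have ne1 : rise b k ≠ 0 := rise_ne hb k
    have ne2 : rise (b+k) (n-k) ≠ 0 := rise_ne (by positivity) (n-k)
    have ne3 : rise b' (n-k) ≠ 0 := rise_ne hb' (n-k)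
    have ne4 : rise (b'+(n-k:ℕ)) k ≠ 0 := rise_ne (by positivity) k
    have ne5 : ((Nat.factorial k : ℝ)) ≠ 0 := Nat.cast_ne_zero.mpr (Nat.factorial_ne_zero k)
    have ne6 : ((Nat.factorial (n-k) : ℝ)) ≠ 0 := Nat.cast_ne_zero.mpr (Nat.factorial_ne_zero (n-k))
    have ne7 : ((n.choose k : ℝ)) ≠ 0 := Nat.cast_ne_zero.mpr (Nat.choose_pos hk').ne'
    have nf : ((Nat.factorial n : ℝ)) ≠ 0 := Nat.cast_ne_zero.mpr (Nat.factorial_ne_zero n)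
    have hD1 : (rise b k * (Nat.factorial k : ℝ)) * (rise b' (n-k) * (Nat.factorial (n-k) : ℝ)) ≠ 0 :=
      mul_ne_zero (mul_ne_zero ne1 ne5) (mul_ne_zero ne3 ne6)
    have hD2 : rise b n * rise b' n * (Nat.factorial n : ℝ) ≠ 0 :=
      mul_ne_zero (mul_ne_zero (rise_ne hb n) (rise_ne hb' n)) nf
    rw [div_mul_div_comm, ← mul_div_assoc, div_eq_div_iff hD1 hD2, hn1, hn2, hfac, ← hx]
    ring
  rw [Finset.sum_congr rfl hterm, ← Finset.mul_sum, ← Finset.sum_div, keyT b b' n]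

noncomputable def f (b x : ℝ) : ℝ := ∑' n : ℕ, x ^ n / (rise b n * (Nat.factorial n))

lemma summable_strong {b : ℝ} (hb : 0 < b) {r : ℝ} (hr : 0 ≤ r) :
    Summable (fun n : ℕ => ((n:ℝ)+1) * r ^ n / (rise b n * (Nat.factorial n))) := by
  apply summable_of_ratio_norm_eventually_le (r := 1/2) (by norm_num : (1:ℝ)/2 < 1)
  rw [Filter.eventually_atTop]
  refine ⟨max 1 ⌈4*r⌉₊, fun n hn => ?_⟩
  have hn1 : 1 ≤ n := le_trans (le_max_left _ _) hn
  have hn4 : 4*r ≤ (n:ℝ) := by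
    have h1 : (⌈4*r⌉₊ : ℕ) ≤ n := le_trans (le_max_right _ _) hn
    exact le_trans (Nat.le_ceil _) (by exact_mod_cast h1)
  have hrn : (0:ℝ) < rise b n := rise_pos hb n
  have hfn : (0:ℝ) < (Nat.factorial n : ℝ) := by exact_mod_cast Nat.factorial_pos n
  have hterm : (0:ℝ) ≤ ((n:ℝ)+1) * r ^ n / (rise b n * (Nat.factorial n)) := by
    apply div_nonneg (by positivity) (by positivity)
  have hterm1 : (0:ℝ) ≤ (((n+1:ℕ):ℝ)+1) * r ^ (n+1) / (rise b (n+1) * (Nat.factorial (n+1))) := by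
    have := rise_pos hb (n+1)
    have : (0:ℝ) < (Nat.factorial (n+1) : ℝ) := by exact_mod_cast Nat.factorial_pos (n+1)
    apply div_nonneg (by positivity) ?_
    have := rise_pos hb (n+1)
    positivity
  rw [Real.norm_of_nonneg hterm1, Real.norm_of_nonneg hterm]
  rw [rise_succ, Nat.factorial_succ]
  push_cast
  rw [mul_div_assoc']
  rw [div_le_div_iff₀ (by positivity) (by positivity)]
  have hncast : (1:ℝ) ≤ (n:ℝ) := by exact_mod_cast hn1
  have hfact : ((n:ℝ)+1+1) * r ≤ 1/2 * (((n:ℝ)+1) * ((b+n) * ((n:ℝ)+1))) := by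
    have h1 : 4*r*((n:ℝ)+2) ≤ (n:ℝ)*((n:ℝ)+2) := mul_le_mul_of_nonneg_right hn4 (by linarith)
    have h2 : (1:ℝ) ≤ b + n := by linarith
    have h3 : (n:ℝ)*((n:ℝ)+2) ≤ 2*((n:ℝ)+1)^2 := by nlinarith
    have h4 : 2*((n:ℝ)+1)^2 ≤ 2*((n:ℝ)+1)^2*(b+n) := le_mul_of_one_le_right (by positivity) h2
    nlinarith [h1, h3, h4]
  have hpow : r ^ (n+1) = r * r ^ n := by rw [pow_succ]; ring
  calc ((n:ℝ)+1+1) * r ^ (n+1) * (rise b n * (Nat.factorial n : ℝ))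
      = (((n:ℝ)+1+1) * r) * (r ^ n * (rise b n * (Nat.factorial n : ℝ))) := by rw [hpow]; ring
    _ ≤ (1/2 * (((n:ℝ)+1) * ((b+n) * ((n:ℝ)+1)))) * (r ^ n * (rise b n * (Nat.factorial n : ℝ))) := by
        apply mul_le_mul_of_nonneg_right hfact (by positivity)
    _ = 1/2 * (((n:ℝ)+1) * r ^ n) * (rise b n * (b + ↑n) * (((n:ℝ)+1) * (Nat.factorial n : ℝ))) := by
        ring

lemma summable_norm_f {b : ℝ} (hb : 0 < b) (x : ℝ) :
    Summable (fun n : ℕ => ‖x ^ n / (rise b n * (Nat.factorial n))‖) := by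
  apply Summable.of_nonneg_of_le (fun n => norm_nonneg _) _ (summable_strong hb (abs_nonneg x))
  intro n
  have hrn : (0:ℝ) < rise b n := rise_pos hb n
  have hfn : (0:ℝ) < (Nat.factorial n : ℝ) := by exact_mod_cast Nat.factorial_pos n
  have hD : (0:ℝ) < rise b n * (Nat.factorial n : ℝ) := by positivity
  rw [Real.norm_eq_abs, abs_div, abs_pow, abs_of_pos hD]
  rw [div_le_div_iff_of_pos_right hD]
  exact le_mul_of_one_le_left (by positivity) (by linarith [Nat.cast_nonneg (α := ℝ) n])

lemma summable_f {b : ℝ} (hb : 0 < b) (x : ℝ) :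
    Summable (fun n : ℕ => x ^ n / (rise b n * (Nat.factorial n))) :=
  (summable_norm_f hb x).of_norm

lemma f_nonneg {b : ℝ} (hb : 0 < b) {x : ℝ} (hx : 0 ≤ x) : 0 ≤ f b x := by
  apply tsum_nonneg
  intro n
  have hrn : (0:ℝ) < rise b n := rise_pos hb n
  have hfn : (0:ℝ) < (Nat.factorial n : ℝ) := by exact_mod_cast Nat.factorial_pos n
  positivity

lemma f_zero {b : ℝ} (hb : 0 < b) : f b 0 = 1 := by
  rw [f, tsum_eq_single 0 ?_]
  · simp [rise_zero]
  · intro n hn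
    rw [zero_pow hn, zero_div]

lemma hasDerivAt_f {b : ℝ} (hb : 0 < b) (x : ℝ) :
    HasDerivAt (f b) (f (b+1) x / b) x := by
  set R : ℝ := |x| + 1 with hR
  have hax := abs_nonneg x
  have hR1 : (1:ℝ) ≤ R := by rw [hR]; linarith
  have hR0 : (0:ℝ) ≤ R := by linarith
  have hxR : x ∈ Metric.ball (0:ℝ) R := by
    rw [Metric.mem_ball, Real.dist_eq, sub_zero, hR]
    linarith
  have h0R : (0:ℝ) ∈ Metric.ball (0:ℝ) R := by
    rw [Metric.mem_ball, Real.dist_eq, sub_zero, abs_zero, hR]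
    linarith
  have hbound : ∀ (n : ℕ) (y : ℝ), y ∈ Metric.ball (0:ℝ) R →
      ‖(n : ℝ) * y ^ (n-1) / (rise b n * (Nat.factorial n))‖
        ≤ ((n:ℝ)+1) * R ^ n / (rise b n * (Nat.factorial n)) := by
    intro n y hy
    have hyR : |y| ≤ R := by
      rw [Metric.mem_ball, Real.dist_eq, sub_zero] at hy
      exact hy.le
    have hrn : (0:ℝ) < rise b n := rise_pos hb n
    have hfn : (0:ℝ) < (Nat.factorial n : ℝ) := by exact_mod_cast Nat.factorial_pos n
    have hD : (0:ℝ) < rise b n * (Nat.factorial n : ℝ) := by positivity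
    rw [Real.norm_eq_abs, abs_div, abs_of_pos hD, div_le_div_iff_of_pos_right hD]
    have h1 : |(n:ℝ) * y ^ (n-1)| = (n:ℝ) * |y| ^ (n-1) := by
      rw [abs_mul, abs_pow, Nat.abs_cast]
    rw [h1]
    calc (n:ℝ) * |y| ^ (n-1) ≤ (n:ℝ) * R ^ (n-1) := by
          apply mul_le_mul_of_nonneg_left (pow_le_pow_left₀ (abs_nonneg y) hyR _) (Nat.cast_nonneg n)
      _ ≤ ((n:ℝ)+1) * R ^ n := by
          apply mul_le_mul (by linarith) (pow_le_pow_right₀ hR1 (Nat.sub_le n 1))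
            (by positivity) (by linarith [Nat.cast_nonneg (α := ℝ) n])
  have hder : ∀ (n:ℕ) (y:ℝ), y ∈ Metric.ball (0:ℝ) R →
      HasDerivAt (fun z => z ^ n / (rise b n * (Nat.factorial n)))
        ((n:ℝ) * y^(n-1) / (rise b n * (Nat.factorial n))) y :=
    fun n y _ => (hasDerivAt_pow n y).div_const _
  have hsum0 : Summable (fun n : ℕ => (0:ℝ) ^ n / (rise b n * (Nat.factorial n))) :=
    summable_f hb 0
  have keyd := hasDerivAt_tsum_of_isPreconnected (summable_strong hb hR0) Metric.isOpen_ball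
    ((convex_ball (0:ℝ) R).isPreconnected) hder hbound h0R hsum0 hxR
  have hsum_eq : (∑' n : ℕ, (n:ℝ) * x^(n-1)/(rise b n * (Nat.factorial n))) = f (b+1) x / b := by
    have hs : Summable (fun n : ℕ => (n:ℝ) * x^(n-1)/(rise b n * (Nat.factorial n))) :=
      Summable.of_norm_bounded (summable_strong hb hR0) (fun n => hbound n x hxR)
    rw [Summable.tsum_eq_zero_add hs]
    simp only [Nat.cast_zero, zero_mul, zero_div, zero_add]
    have hterm : ∀ n : ℕ, ((n+1:ℕ):ℝ) * x^((n+1)-1)/(rise b (n+1) * (Nat.factorial (n+1)))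
        = (x^n / (rise (b+1) n * (Nat.factorial n))) / b := by
      intro n
      rw [rise_succ', Nat.factorial_succ, show (n+1)-1 = n from rfl]
      have ne1 : rise (b+1) n ≠ 0 := rise_ne (by linarith) n
      have ne2 : ((Nat.factorial n : ℝ)) ≠ 0 := Nat.cast_ne_zero.mpr (Nat.factorial_ne_zero n)
      push_cast
      field_simp
    rw [tsum_congr hterm, tsum_div_const]
    rfl
  rw [← hsum_eq]
  exact keyd

lemma prod_eq (x : ℝ) {b b' : ℝ} (hb : 0 < b) (hb' : 0 < b') :
    f b x * f b' x
      = ∑' n : ℕ, x ^ n * (rise (b+b'+n-1) n / (rise b n * rise b' n * (Nat.factorial n))) := by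
  rw [f, f, tsum_mul_tsum_eq_tsum_sum_range_of_summable_norm (summable_norm_f hb x)
    (summable_norm_f hb' x)]
  exact tsum_congr (fun n => cauchyCoeff x hb hb' n)

lemma summable_prod (x : ℝ) {b b' : ℝ} (hb : 0 < b) (hb' : 0 < b') :
    Summable (fun n : ℕ =>
      x ^ n * (rise (b+b'+n-1) n / (rise b n * rise b' n * (Nat.factorial n)))) := by
  have h := (summable_norm_sum_mul_range_of_summable_norm (summable_norm_f hb x)
    (summable_norm_f hb' x)).of_norm
  exact h.congr (fun n => cauchyCoeff x hb hb' n)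

lemma turan {c : ℝ} (hc : 0 < c) {x : ℝ} (hx : 0 ≤ x) :
    c * (f c x * f (c+2) x) ≤ (c+1) * (f (c+1) x * f (c+1) x) := by
  have hc1 : (0:ℝ) < c + 1 := by linarith
  have hc2 : (0:ℝ) < c + 2 := by linarith
  rw [prod_eq x hc hc2, prod_eq x hc1 hc1, ← tsum_mul_left, ← tsum_mul_left]
  apply Summable.tsum_le_tsum _ ((summable_prod x hc hc2).mul_left c) ((summable_prod x hc1 hc1).mul_left (c+1))
  intro n
  have hR : c+(c+2)+(n:ℝ)-1 = c+1+(c+1)+(n:ℝ)-1 := by ring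
  rw [hR]
  set Rn := rise (c+1+(c+1)+(n:ℝ)-1) n with hRn
  have hRpos : 0 ≤ Rn := rise_nonneg (by push_cast; linarith [Nat.cast_nonneg (α := ℝ) n]) n
  have p1 : 0 < rise c n := rise_pos hc n
  have p2 : 0 < rise (c+1) n := rise_pos hc1 n
  have p3 : 0 < rise (c+2) n := rise_pos hc2 n
  have pf : (0:ℝ) < (Nat.factorial n : ℝ) := by exact_mod_cast Nat.factorial_pos n
  have hcore : c / (rise c n * rise (c+2) n) ≤ (c+1) / (rise (c+1) n * rise (c+1) n) := by
    rw [div_le_div_iff₀ (by positivity) (by positivity)]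
    have h1 : c * rise (c+1) n = rise c n * (c+n) := by
      rw [← rise_succ', rise_succ]
    have h2 : (c+1) * rise (c+2) n = rise (c+1) n * (c+1+n) := by
      have h := rise_succ' (c+1) n
      rw [show (c:ℝ)+1+1 = c+2 by ring] at h
      rw [← h, rise_succ]
    calc c * (rise (c+1) n * rise (c+1) n)
        = (c * rise (c+1) n) * rise (c+1) n := by ring
      _ = rise c n * (c+n) * rise (c+1) n := by rw [h1]
      _ ≤ rise c n * (c+1+n) * rise (c+1) n := by
          apply mul_le_mul_of_nonneg_right (mul_le_mul_of_nonneg_left (by linarith) p1.le) p2.le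
      _ = rise c n * (rise (c+1) n * (c+1+n)) := by ring
      _ = rise c n * ((c+1) * rise (c+2) n) := by rw [← h2]
      _ = (c+1) * (rise c n * rise (c+2) n) := by ring
  calc c * (x ^ n * (Rn / (rise c n * rise (c+2) n * (Nat.factorial n))))
      = (x ^ n * Rn / (Nat.factorial n)) * (c / (rise c n * rise (c+2) n)) := by ring
    _ ≤ (x ^ n * Rn / (Nat.factorial n)) * ((c+1) / (rise (c+1) n * rise (c+1) n)) := by
        apply mul_le_mul_of_nonneg_left hcore (by positivity)
    _ = (c+1) * (x ^ n * (Rn / (rise (c+1) n * rise (c+1) n * (Nat.factorial n)))) := by ring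

lemma contig {c : ℝ} (hc : 0 < c) (x : ℝ) :
    x * f (c+2) x = c*(c+1)*(f c x - f (c+1) x) := by
  have hc1 : (0:ℝ) < c + 1 := by linarith
  have hc2 : (0:ℝ) < c + 2 := by linarith
  set g : ℕ → ℝ := fun n =>
    c*(c+1)*(x^n/(rise c n * (Nat.factorial n)) - x^n/(rise (c+1) n * (Nat.factorial n))) with hg
  have h1 : c*(c+1)*(f c x - f (c+1) x) = ∑' n, g n := by
    rw [f, f, ← Summable.tsum_sub (summable_f hc x) (summable_f hc1 x), ← tsum_mul_left]
  have hgs : Summable g := ((summable_f hc x).sub (summable_f hc1 x)).mul_left _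
  have hg0 : g 0 = 0 := by simp [hg, rise_zero]
  rw [h1, Summable.tsum_eq_zero_add hgs, hg0, zero_add, f, ← tsum_mul_left]
  apply tsum_congr
  intro n
  have e1 : rise c (n+1) = c * rise (c+1) n := rise_succ' c n
  have e2 : rise (c+1) (n+1) = (c+1) * rise (c+2) n := by
    have h := rise_succ' (c+1) n
    rwa [show (c:ℝ)+1+1 = c+2 by ring] at h
  have e3 : rise (c+1) (n+1) = rise (c+1) n * (c+1+n) := rise_succ (c+1) n
  have hD : rise (c+1) n = (c+1) * rise (c+2) n / (c+1+n) := by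
    have h4 : (0:ℝ) < c+1+n := by have := Nat.cast_nonneg (α := ℝ) n; linarith
    field_simp
    rw [← e3, e2]
  show x * (x^n/(rise (c+2) n * (Nat.factorial n))) = g (n+1)
  rw [hg]
  simp only
  rw [e1, e2, Nat.factorial_succ, hD]
  have h4 : (0:ℝ) < c+1+n := by have := Nat.cast_nonneg (α := ℝ) n; linarith
  have ne1 : rise (c+2) n ≠ 0 := rise_ne hc2 n
  have ne2 : ((Nat.factorial n : ℝ)) ≠ 0 := Nat.cast_ne_zero.mpr (Nat.factorial_ne_zero n)
  push_cast
  field_simp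
  ring

lemma ratio {c : ℝ} (hc : 0 < c) {x : ℝ} (hx : 0 ≤ x) :
    2*c*(f c x) ≤ (Real.sqrt (4*x+c^2) + c) * f (c+1) x := by
  have hc1 : (0:ℝ) < c + 1 := by linarith
  have hc2 : (0:ℝ) < c + 2 := by linarith
  set A := f (c+1) x with hA
  set F0 := f c x with hF0
  set D := f (c+2) x with hD
  have hAn : 0 ≤ A := f_nonneg hc1 hx
  have hcontig : x*D = c*(c+1)*(F0 - A) := contig hc x
  have hTuran : c * (F0*D) ≤ (c+1) * (A*A) := turan hc hx
  have hid : ((4*x+c^2)*(A*A) - (2*c*F0 - c*A)^2) * (c+1) = 4*x * ((c+1)*(A*A) - c*(F0*D)) := by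
    linear_combination (4*c) * F0 * hcontig
  have h5 : 0 ≤ ((4*x+c^2)*(A*A) - (2*c*F0 - c*A)^2) * (c+1) := by
    rw [hid]
    exact mul_nonneg (by positivity) (by linarith)
  have hsq : (2*c*F0 - c*A)^2 ≤ (4*x+c^2)*(A*A) := by nlinarith [h5, hc1]
  have h6 : 2*c*F0 - c*A ≤ Real.sqrt (4*x+c^2) * A := by
    have hs1 : Real.sqrt ((2*c*F0 - c*A)^2) ≤ Real.sqrt ((4*x+c^2)*(A*A)) :=
      Real.sqrt_le_sqrt hsq
    rw [Real.sqrt_sq_eq_abs] at hs1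
    have hs2 : Real.sqrt ((4*x+c^2)*(A*A)) = Real.sqrt (4*x+c^2) * A := by
      rw [Real.sqrt_mul (by positivity), show A*A = A^2 by ring, Real.sqrt_sq hAn]
    rw [hs2] at hs1
    exact le_trans (le_abs_self _) hs1
  linarith

noncomputable def uaux (c y : ℝ) : ℝ :=
  Real.exp (c - Real.sqrt (4*y+c^2)) *
    ((1 / 2 : ℝ) + (1 / (2 * c)) * Real.sqrt (4*y+c^2)) ^ (c : ℝ)

lemma arg_pos {c y : ℝ} (hc : 0 < c) (hy : 0 ≤ y) : 0 < 4*y + c^2 := by nlinarith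

lemma B_pos {c y : ℝ} (hc : 0 < c) (hy : 0 ≤ y) :
    0 < (1 / 2 : ℝ) + (1 / (2 * c)) * Real.sqrt (4*y+c^2) := by
  have h1 : (0:ℝ) < 2*c := by linarith
  have h2 : 0 ≤ 1/(2*c) * Real.sqrt (4*y+c^2) :=
    mul_nonneg (le_of_lt (one_div_pos.mpr h1)) (Real.sqrt_nonneg _)
  linarith

lemma uaux_pos {c y : ℝ} (hc : 0 < c) (hy : 0 ≤ y) : 0 < uaux c y :=
  mul_pos (Real.exp_pos _) (Real.rpow_pos_of_pos (B_pos hc hy) _)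

lemma hasDerivAt_uaux {c y : ℝ} (hc : 0 < c) (hy : 0 ≤ y) :
    HasDerivAt (uaux c) (-2 * uaux c y / (Real.sqrt (4*y+c^2) + c)) y := by
  have h4 : 0 < 4*y + c^2 := arg_pos hc hy
  have hsy : 0 < Real.sqrt (4*y+c^2) := Real.sqrt_pos.mpr h4
  have hBy : 0 < (1 / 2 : ℝ) + (1 / (2 * c)) * Real.sqrt (4*y+c^2) := B_pos hc hy
  have hlin : HasDerivAt (fun z : ℝ => 4*z + c^2) 4 y := by
    simpa using ((hasDerivAt_id y).const_mul (4:ℝ)).add_const (c^2)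
  have hs' : HasDerivAt (fun z => Real.sqrt (4*z+c^2)) (2 / Real.sqrt (4*y+c^2)) y := by
    have h := (Real.hasDerivAt_sqrt h4.ne').comp y hlin
    have heq : 1/(2 * Real.sqrt (4*y+c^2)) * 4 = 2 / Real.sqrt (4*y+c^2) := by
      field_simp
      ring
    rw [← heq]
    exact h
  have hB' : HasDerivAt (fun z => (1 / 2 : ℝ) + (1 / (2 * c)) * Real.sqrt (4*z+c^2))
      ((1/(2*c)) * (2 / Real.sqrt (4*y+c^2))) y :=
    (hs'.const_mul (1/(2*c))).const_add (1/2)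
  have hrp : HasDerivAt
      (fun z => ((1 / 2 : ℝ) + (1 / (2 * c)) * Real.sqrt (4*z+c^2)) ^ (c : ℝ))
      (((1/(2*c)) * (2 / Real.sqrt (4*y+c^2))) * (c : ℝ)
        * ((1 / 2 : ℝ) + (1 / (2 * c)) * Real.sqrt (4*y+c^2)) ^ ((c:ℝ)-1)) y :=
    hB'.rpow_const (Or.inl hBy.ne')
  have hexp : HasDerivAt (fun z => Real.exp (c - Real.sqrt (4*z+c^2)))
      (Real.exp (c - Real.sqrt (4*y+c^2)) * (-(2 / Real.sqrt (4*y+c^2)))) y :=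
    (hs'.const_sub c).exp
  have hmul := hexp.mul hrp
  have e : ((1 / 2 : ℝ) + (1 / (2 * c)) * Real.sqrt (4*y+c^2)) ^ ((c:ℝ)-1)
      = ((1 / 2 : ℝ) + (1 / (2 * c)) * Real.sqrt (4*y+c^2)) ^ (c:ℝ)
        / ((1 / 2 : ℝ) + (1 / (2 * c)) * Real.sqrt (4*y+c^2)) := by
    rw [Real.rpow_sub hBy, Real.rpow_one]
  rw [e] at hmul
  refine hmul.congr_deriv ?_
  rw [uaux]
  set sy := Real.sqrt (4*y+c^2) with hsydef
  set Q := ((1 / 2 : ℝ) + (1 / (2 * c)) * sy) ^ (c:ℝ) with hQ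
  have hsc : sy + c ≠ 0 := by positivity
  field_simp
  ring

end Stmt9Aux

open Stmt9Aux in
theorem stmt9 (c x : ℝ) (hc : 0 < c) (hx : 0 ≤ x) :
    Real.exp (Real.sqrt (4 * x + c ^ 2) - c) *
        ((1 / 2 : ℝ) + (1 / (2 * c)) * Real.sqrt (4 * x + c ^ 2)) ^ (-c)
      ≤ ∑' n : ℕ, x ^ n / (rise c n * (Nat.factorial n)) := by
  have hK : ∀ y ∈ Set.Ici (0:ℝ), HasDerivAt (fun z => f c z * uaux c z)
      (f (c+1) y / c * uaux c y + f c y * (-2 * uaux c y / (Real.sqrt (4*y+c^2) + c))) y :=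
    fun y hy => (hasDerivAt_f hc y).mul (hasDerivAt_uaux hc hy)
  have hKnonneg : ∀ y ∈ interior (Set.Ici (0:ℝ)), 0 ≤ deriv (fun z => f c z * uaux c z) y := by
    rw [interior_Ici]
    intro y hy
    have hy0 : (0:ℝ) ≤ y := le_of_lt hy
    rw [(hK y hy0).deriv]
    have hsy : 0 < Real.sqrt (4*y+c^2) := Real.sqrt_pos.mpr (arg_pos hc hy0)
    have hu : 0 < uaux c y := uaux_pos hc hy0
    have hratio : 2*c*(f c y) ≤ (Real.sqrt (4*y+c^2) + c) * f (c+1) y := ratio hc hy0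
    have heq : f (c+1) y / c * uaux c y + f c y * (-2 * uaux c y / (Real.sqrt (4*y+c^2) + c))
        = (uaux c y / (c * (Real.sqrt (4*y+c^2) + c)))
            * ((Real.sqrt (4*y+c^2) + c) * f (c+1) y - 2*c*(f c y)) := by
      have h1 : Real.sqrt (4*y+c^2) + c ≠ 0 := by positivity
      field_simp
      ring
    rw [heq]
    exact mul_nonneg (by positivity) (by linarith)
  have hmono : MonotoneOn (fun z => f c z * uaux c z) (Set.Ici 0) :=
    monotoneOn_of_deriv_nonneg (convex_Ici 0)
      (fun y hy => (hK y hy).continuousAt.continuousWithinAt)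
      (fun y hy => by
        rw [interior_Ici] at hy
        exact ((hK y (Set.mem_Ici.mpr (le_of_lt (Set.mem_Ioi.mp hy)))).differentiableAt.differentiableWithinAt))
      hKnonneg
  have h01 := hmono (Set.self_mem_Ici) (Set.mem_Ici.mpr hx) hx
  have hs0 : Real.sqrt (4*(0:ℝ)+c^2) = c := by
    rw [show 4*(0:ℝ)+c^2 = c^2 by ring, Real.sqrt_sq hc.le]
  have hu0 : uaux c 0 = 1 := by
    rw [uaux, hs0, sub_self, Real.exp_zero, one_mul,
      show (1 / 2 : ℝ) + 1/(2*c) * c = 1 by field_simp; ring]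
    exact Real.one_rpow _
  have h1 : (1:ℝ) ≤ f c x * uaux c x := by
    have := h01
    simp only [f_zero hc, hu0, mul_one] at this
    exact this
  have hBX : 0 < (1 / 2 : ℝ) + (1 / (2 * c)) * Real.sqrt (4*x+c^2) := B_pos hc hx
  have hux : 0 < uaux c x := uaux_pos hc hx
  have hgoal_eq : Real.exp (Real.sqrt (4 * x + c ^ 2) - c) *
      ((1 / 2 : ℝ) + (1 / (2 * c)) * Real.sqrt (4 * x + c ^ 2)) ^ (-c)
        = 1 / uaux c x := by
    rw [uaux]
    set S := Real.sqrt (4*x+c^2) with hS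
    set Bx := (1 / 2 : ℝ) + 1/(2*c) * S with hBxd
    have hP : (0:ℝ) < Bx ^ (c:ℝ) := Real.rpow_pos_of_pos hBX _
    rw [eq_div_iff (mul_ne_zero (Real.exp_ne_zero _) hP.ne')]
    rw [Real.rpow_neg hBX.le]
    have h2 : (Bx ^ (c:ℝ))⁻¹ * (Real.exp (c - S) * Bx ^ (c:ℝ)) = Real.exp (c - S) := by
      field_simp
    rw [mul_assoc, h2, ← Real.exp_add, show (S-c)+(c-S) = 0 by ring, Real.exp_zero]
  rw [hgoal_eq, div_le_iff₀ hux]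
  exact h1
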